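/- Let a > −1, b > −1, c > max{0, a−b} be real numbers and d ∈ {0, 1}. Then for all nonnegative integers k and n with n ≥ 2k + 1, ∫_0^∞ x^k P_n^{(d)}(x; a, b, c) W(x; a, b, c+d) dx = 0. -/

import Mathlib

open MeasureTheory Filter Set

/-- Pochhammer symbol `(z)_k = z (z+1) ⋯ (z+k-1)`. -/
noncomputable def poch (z : ℝ) (k : ℕ) : ℝ := ∏ i ∈ Finset.range k, (z + i)

/-- Confluent hypergeometric function of the second kind (Tricomi function),
via its integral representation, valid for `α > 0`, `x > 0`. -/
noncomputable def TricomiU (α β x : ℝ) : ℝ :=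
  (1 / Real.Gamma α) *
    ∫ t in Set.Ioi (0:ℝ), t ^ (α - 1) * (1 + t) ^ (β - α - 1) * Real.exp (-t * x)

/-- The weight function `W(x; a, b, c)`. -/
noncomputable def W (a b c x : ℝ) : ℝ :=
  (Real.Gamma (c + b + 1) / (Real.Gamma (a + 1) * Real.Gamma (b + 1))) *
    Real.exp (-x) * x ^ a * TricomiU c (a - b + 1) x

/-- The monic type II multiple orthogonal polynomial on the step line:
`P_n^{(d)}(x; a, b, c) = Σ_{j=0}^n (−1)^{n−j} C(n,j)
  ((a+1+j)_{n−j}(b+1+j)_{n−j}/(c+b+1+⌊(n+d)/2⌋+j)_{n−j}) x^j`. -/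
noncomputable def Ptype2 (d : ℕ) (a b c : ℝ) (n : ℕ) (x : ℝ) : ℝ :=
  ∑ j ∈ Finset.range (n + 1),
    (-1 : ℝ) ^ (n - j) * (n.choose j : ℝ) *
      (poch (a + 1 + j) (n - j) * poch (b + 1 + j) (n - j) /
        poch (c + b + 1 + (((n + d) / 2 : ℕ) : ℝ) + j) (n - j)) * x ^ j

/-! ### Auxiliary lemmas -/

lemma poch_pos {z : ℝ} (hz : 0 < z) (r : ℕ) : 0 < poch z r :=
  Finset.prod_pos fun i _ => by positivity

lemma Gamma_add_nat {z : ℝ} (hz : 0 < z) (r : ℕ) :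
    Real.Gamma (z + r) = poch z r * Real.Gamma z := by
  induction r with
  | zero => simp [poch]
  | succ r ih =>
      have h1 : z + (r+1:ℕ) = (z + r) + 1 := by push_cast; ring
      rw [h1, Real.Gamma_add_one (by positivity), ih]
      simp only [poch, Finset.prod_range_succ]
      ring

lemma comp_sub_natDegree_lt {p : Polynomial ℝ} (hp : p - p.comp (Polynomial.X + 1) ≠ 0) :
    (p - p.comp (Polynomial.X + 1)).natDegree < p.natDegree := by
  have hX : (Polynomial.X + 1 : Polynomial ℝ) = Polynomial.X + Polynomial.C 1 := by
    simp
  have hndX : (Polynomial.X + 1 : Polynomial ℝ).natDegree = 1 := by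
    rw [hX]; exact Polynomial.natDegree_X_add_C 1
  have hlcX : (Polynomial.X + 1 : Polynomial ℝ).leadingCoeff = 1 := by
    rw [hX]; exact Polynomial.leadingCoeff_X_add_C 1
  have hp0 : p ≠ 0 := by rintro rfl; simp at hp
  have hlc : (p.comp (Polynomial.X + 1)).leadingCoeff = p.leadingCoeff := by
    rw [Polynomial.leadingCoeff_comp (by rw [hndX]; norm_num), hlcX, one_pow, mul_one]
  have hcomp0 : p.comp (Polynomial.X + 1) ≠ 0 := by
    intro h
    apply hp0
    rw [← Polynomial.leadingCoeff_eq_zero, ← hlc, h, Polynomial.leadingCoeff_zero]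
  have hnd : (p.comp (Polynomial.X + 1)).natDegree = p.natDegree := by
    rw [Polynomial.natDegree_comp, hndX, mul_one]
  have hdeg : p.degree = (p.comp (Polynomial.X + 1)).degree := by
    rw [Polynomial.degree_eq_natDegree hp0, Polynomial.degree_eq_natDegree hcomp0, hnd]
  have := Polynomial.degree_sub_lt hdeg hp0 hlc.symm
  exact Polynomial.natDegree_lt_natDegree hp this

lemma alt_sum_poly : ∀ (n : ℕ) (p : Polynomial ℝ), p.natDegree < n →
    ∑ j ∈ Finset.range (n+1), (-1:ℝ)^j * (n.choose j) * p.eval (j:ℝ) = 0 := by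
  intro n
  induction n with
  | zero => intro p hp; omega
  | succ n ih =>
      intro p hp
      set q : Polynomial ℝ := p - p.comp (Polynomial.X + 1) with hq
      have hqeval : ∀ x : ℝ, q.eval x = p.eval x - p.eval (x+1) := by
        intro x; simp [hq, Polynomial.eval_comp]
      have key : ∑ j ∈ Finset.range (n+2), (-1:ℝ)^j * ((n+1).choose j) * p.eval (j:ℝ)
          = ∑ j ∈ Finset.range (n+1), (-1:ℝ)^j * (n.choose j) * q.eval (j:ℝ) := by
        have hsplit : ∀ j, ((n+1).choose j : ℝ)
            = (n.choose j : ℝ) + (((n+1).choose j - n.choose j : ℕ) : ℝ) := by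
          intro j
          rw [Nat.cast_sub (Nat.choose_le_choose j (Nat.le_succ n))]
          ring
        calc ∑ j ∈ Finset.range (n+2), (-1:ℝ)^j * ((n+1).choose j) * p.eval (j:ℝ)
            = (∑ j ∈ Finset.range (n+2), (-1:ℝ)^j * (n.choose j) * p.eval (j:ℝ))
              + ∑ j ∈ Finset.range (n+2),
                  (-1:ℝ)^j * (((n+1).choose j - n.choose j : ℕ) : ℝ) * p.eval (j:ℝ) := by
              rw [← Finset.sum_add_distrib]
              refine Finset.sum_congr rfl fun j _ => ?_
              rw [hsplit j]; ring
          _ = (∑ j ∈ Finset.range (n+1), (-1:ℝ)^j * (n.choose j) * p.eval (j:ℝ))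
              - ∑ i ∈ Finset.range (n+1), (-1:ℝ)^i * (n.choose i) * p.eval ((i:ℝ)+1) := by
              congr 1
              · rw [Finset.sum_range_succ]
                simp [Nat.choose_eq_zero_of_lt (Nat.lt_succ_self n)]
              · rw [Finset.sum_range_succ'
                  (fun j => (-1:ℝ)^j * (((n+1).choose j - n.choose j : ℕ) : ℝ) * p.eval (j:ℝ)) (n+1)]
                have hterm : ∀ i ∈ Finset.range (n+1),
                    (-1:ℝ)^(i+1) * (((n+1).choose (i+1) - n.choose (i+1) : ℕ) : ℝ) * p.eval ((i+1:ℕ):ℝ)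
                    = -((-1:ℝ)^i * (n.choose i) * p.eval ((i:ℝ)+1)) := by
                  intro i _
                  have hg : (n+1).choose (i+1) - n.choose (i+1) = n.choose i := by
                    have h := Nat.choose_succ_succ n i
                    simp only [Nat.succ_eq_add_one] at h
                    omega
                  rw [hg]; push_cast; ring
                rw [Finset.sum_congr rfl hterm]
                simp [Finset.sum_neg_distrib]
          _ = _ := by
              rw [← Finset.sum_sub_distrib]
              refine Finset.sum_congr rfl fun j _ => ?_
              rw [hqeval]; ring
      rw [key]
      by_cases hq0 : q = 0
      · simp [hq0]
      · refine ih q ?_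
        have h2 := comp_sub_natDegree_lt (p := p) (by rw [← hq]; exact hq0)
        rw [← hq] at h2
        omega

/-! ### Gamma-type integrals -/

lemma GA_val {p r : ℝ} (hp : -1 < p) (hr : 0 < r) :
    ∫ x in Ioi (0:ℝ), x ^ p * Real.exp (-(r * x)) = Real.Gamma (p+1) / r ^ (p+1) := by
  have := Real.integral_rpow_mul_exp_neg_mul_Ioi (a := p+1) (r := r) (by linarith) hr
  simp only [add_sub_cancel_right] at this
  rw [this, Real.div_rpow (by positivity) hr.le, Real.one_rpow]
  ring

lemma GA_int {p r : ℝ} (hp : -1 < p) (hr : 0 < r) :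
    IntegrableOn (fun x : ℝ => x ^ p * Real.exp (-(r * x))) (Ioi 0) := by
  have := integrableOn_rpow_mul_exp_neg_mul_rpow (p := 1) hp one_pos hr
  simpa only [Real.rpow_one, neg_mul] using this

section Beta
variable {u v : ℝ}

private noncomputable def bf (u v : ℝ) (x t : ℝ) : ℝ :=
  x ^ (u+v-1) * Real.exp (-x) * (t ^ (u-1) * Real.exp (-(t*x)))

lemma bf_int (hu : 0 < u) (hv : 0 < v) :
    Integrable (Function.uncurry (bf u v))
      ((volume.restrict (Ioi (0:ℝ))).prod (volume.restrict (Ioi (0:ℝ)))) := by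
  rw [integrable_prod_iff (by apply Measurable.aestronglyMeasurable; unfold bf; fun_prop)]
  simp only [Function.uncurry_apply_pair]
  constructor
  · filter_upwards [ae_restrict_mem measurableSet_Ioi] with x hx
    have : (fun t => bf u v x t)
        = fun t => (x ^ (u+v-1) * Real.exp (-x)) * (t ^ (u-1) * Real.exp (-(x*t))) := by
      funext t; unfold bf; rw [mul_comm t x]
    rw [this]
    exact ((GA_int (by linarith) hx).const_mul _)
  · apply Integrable.congr ((GA_int (p := v-1) (r := 1) (by linarith) one_pos).const_mul
      (Real.Gamma u))
    filter_upwards [ae_restrict_mem measurableSet_Ioi] with x hx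
    have hnn : ∀ᵐ t ∂(volume.restrict (Ioi (0:ℝ))), ‖bf u v x t‖ = bf u v x t := by
      filter_upwards [ae_restrict_mem measurableSet_Ioi] with t ht
      rw [Real.norm_eq_abs, abs_of_nonneg]
      unfold bf
      have h1 : (0:ℝ) ≤ x ^ (u+v-1) := Real.rpow_nonneg (le_of_lt hx) _
      have h2 : (0:ℝ) ≤ t ^ (u-1) := Real.rpow_nonneg (le_of_lt ht) _
      positivity
    rw [integral_congr_ae hnn]
    have : ∀ t : ℝ, bf u v x t
        = (x ^ (u+v-1) * Real.exp (-x)) * (t ^ (u-1) * Real.exp (-(x*t))) := by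
      intro t; unfold bf; rw [mul_comm t x]
    simp_rw [this]
    rw [integral_const_mul, GA_val (by linarith) hx]
    have hxne : x ^ u ≠ 0 := (Real.rpow_pos_of_pos hx u).ne'
    have hsub : x ^ (v-1) = x ^ (u+v-1) / x ^ u := by
      rw [← Real.rpow_sub hx]; ring_nf
    rw [hsub]
    have : u - 1 + 1 = u := by ring
    rw [this]
    field_simp

lemma B_val (hu : 0 < u) (hv : 0 < v) :
    ∫ t in Ioi (0:ℝ), t ^ (u-1) * (1+t) ^ (-(u+v))
      = Real.Gamma u * Real.Gamma v / Real.Gamma (u+v) := by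
  have hswap := integral_integral_swap (f := bf u v) (bf_int hu hv)
  have hL : (∫ x in Ioi (0:ℝ), ∫ t in Ioi (0:ℝ), bf u v x t)
      = Real.Gamma u * Real.Gamma v := by
    rw [setIntegral_congr_fun (g := fun x => Real.Gamma u * (x ^ (v-1) * Real.exp (-(1*x))))
      measurableSet_Ioi ?_]
    · rw [integral_const_mul, GA_val (by linarith) one_pos]
      have : v - 1 + 1 = v := by ring
      rw [this]
      simp
    · intro x hx
      have : ∀ t : ℝ, bf u v x t
          = (x ^ (u+v-1) * Real.exp (-x)) * (t ^ (u-1) * Real.exp (-(x*t))) := by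
        intro t; unfold bf; rw [mul_comm t x]
      simp_rw [this]
      rw [integral_const_mul, GA_val (by linarith) hx]
      have hsub : x ^ (v-1) = x ^ (u+v-1) / x ^ u := by
        rw [← Real.rpow_sub hx]; ring_nf
      have : u - 1 + 1 = u := by ring
      rw [this, hsub]
      have hxu : (0:ℝ) < x ^ u := Real.rpow_pos_of_pos hx u
      rw [Real.exp_neg, Real.exp_neg]
      field_simp
  have hR : (∫ t in Ioi (0:ℝ), ∫ x in Ioi (0:ℝ), bf u v x t)
      = Real.Gamma (u+v) * ∫ t in Ioi (0:ℝ), t ^ (u-1) * (1+t) ^ (-(u+v)) := by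
    rw [← integral_const_mul]
    refine setIntegral_congr_fun measurableSet_Ioi fun t ht => ?_
    have h1t : (0:ℝ) < 1 + t := by simp at ht; linarith
    have : ∀ x : ℝ, bf u v x t
        = t ^ (u-1) * (x ^ (u+v-1) * Real.exp (-((1+t)*x))) := by
      intro x
      unfold bf
      have hexp : Real.exp (-x) * Real.exp (-(t*x)) = Real.exp (-((1+t)*x)) := by
        rw [← Real.exp_add]; congr 1; ring
      rw [← hexp]; ring
    simp_rw [this]
    rw [integral_const_mul, GA_val (by linarith) h1t]
    have : u + v - 1 + 1 = u + v := by ring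
    rw [this, Real.rpow_neg h1t.le, div_eq_mul_inv]
    ring
  have hG : Real.Gamma (u+v) ≠ 0 := (Real.Gamma_pos_of_pos (by linarith)).ne'
  rw [hL, hR] at hswap
  rw [eq_div_iff hG, mul_comm]
  exact hswap.symm

lemma B_int (hu : 0 < u) (hv : 0 < v) :
    IntegrableOn (fun t : ℝ => t ^ (u-1) * (1+t) ^ (-(u+v))) (Ioi 0) := by
  have h := (bf_int hu hv).integral_prod_right
  have hG : Real.Gamma (u+v) ≠ 0 := (Real.Gamma_pos_of_pos (by linarith)).ne'
  apply Integrable.congr (h.const_mul (Real.Gamma (u+v))⁻¹)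
  filter_upwards [ae_restrict_mem measurableSet_Ioi] with t ht
  have h1t : (0:ℝ) < 1 + t := by simp at ht; linarith
  have : ∀ x : ℝ, bf u v x t
      = t ^ (u-1) * (x ^ (u+v-1) * Real.exp (-((1+t)*x))) := by
    intro x
    unfold bf
    have hexp : Real.exp (-x) * Real.exp (-(t*x)) = Real.exp (-((1+t)*x)) := by
      rw [← Real.exp_add]; congr 1; ring
    rw [← hexp]; ring
  show (Real.Gamma (u+v))⁻¹ * ∫ x in Ioi (0:ℝ), bf u v x t = _
  simp_rw [this]
  rw [integral_const_mul, GA_val (by linarith) h1t]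
  have h2 : u + v - 1 + 1 = u + v := by ring
  rw [h2, Real.rpow_neg h1t.le, div_eq_mul_inv]
  field_simp

end Beta

/-! ### Moments of the weight -/

section Moment
variable {a b c s : ℝ}

noncomputable def mf (a b c s : ℝ) (x t : ℝ) : ℝ :=
  x ^ (a+s) * Real.exp (-x) * (t ^ (c-1) * (1+t) ^ (a-b-c) * Real.exp (-(t*x)))

lemma mf_sect (t : ℝ) : ∀ x : ℝ, mf a b c s x t
    = (t ^ (c-1) * (1+t) ^ (a-b-c)) * (x ^ (a+s) * Real.exp (-((1+t)*x))) := by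
  intro x
  unfold mf
  have hexp : Real.exp (-x) * Real.exp (-(t*x)) = Real.exp (-((1+t)*x)) := by
    rw [← Real.exp_add]; congr 1; ring
  rw [← hexp]; ring

lemma mf_sect_int (has : -1 < a + s) (hb : -1 < b) (hc : 0 < c)
    (hs : 0 ≤ s) : ∀ t ∈ Ioi (0:ℝ),
    ∫ x in Ioi (0:ℝ), mf a b c s x t
      = Real.Gamma (a+s+1) * (t ^ (c-1) * (1+t) ^ (-(c+(b+s+1)))) := by
  intro t ht
  have h1t : (0:ℝ) < 1 + t := by simp at ht; linarith
  simp_rw [mf_sect t]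
  rw [integral_const_mul, GA_val has h1t]
  have hpow : (1+t) ^ (a-b-c) / (1+t) ^ (a+s+1) = (1+t) ^ (-(c+(b+s+1))) := by
    rw [← Real.rpow_sub h1t]; congr 1; ring
  rw [← hpow]; ring

lemma mf_int (ha : -1 < a) (hb : -1 < b) (hc : 0 < c) {sn : ℕ} (hsn : s = (sn:ℝ)) :
    Integrable (Function.uncurry (mf a b c s))
      ((volume.restrict (Ioi (0:ℝ))).prod (volume.restrict (Ioi (0:ℝ)))) := by
  have hs : (0:ℝ) ≤ s := by rw [hsn]; positivity
  have has : -1 < a + s := by linarith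
  have hbs : 0 < b + s + 1 := by linarith
  rw [integrable_prod_iff' (by apply Measurable.aestronglyMeasurable; unfold mf; fun_prop)]
  simp only [Function.uncurry_apply_pair]
  constructor
  · filter_upwards [ae_restrict_mem measurableSet_Ioi] with t ht
    have h1t : (0:ℝ) < 1 + t := by simp at ht; linarith
    simp_rw [mf_sect t]
    exact (GA_int has h1t).const_mul _
  · apply Integrable.congr ((B_int hc hbs).const_mul (Real.Gamma (a+s+1)))
    filter_upwards [ae_restrict_mem measurableSet_Ioi] with t ht
    have h1t : (0:ℝ) < 1 + t := by simp at ht; linarith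
    have hnn : ∀ᵐ x ∂(volume.restrict (Ioi (0:ℝ))), ‖mf a b c s x t‖ = mf a b c s x t := by
      filter_upwards [ae_restrict_mem measurableSet_Ioi] with x hx
      rw [Real.norm_eq_abs, abs_of_nonneg]
      unfold mf
      have h1 : (0:ℝ) ≤ x ^ (a+s) := Real.rpow_nonneg (le_of_lt hx) _
      have h2 : (0:ℝ) ≤ t ^ (c-1) := Real.rpow_nonneg (le_of_lt ht) _
      have h3 : (0:ℝ) ≤ (1+t) ^ (a-b-c) := Real.rpow_nonneg h1t.le _
      positivity
    rw [integral_congr_ae hnn, mf_sect_int has hb hc hs t ht]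

lemma moment_val (ha : -1 < a) (hb : -1 < b) (hc : 0 < c) {sn : ℕ} (hsn : s = (sn:ℝ)) :
    ∫ x in Ioi (0:ℝ), ∫ t in Ioi (0:ℝ), mf a b c s x t
      = Real.Gamma (a+s+1) * (Real.Gamma c * Real.Gamma (b+s+1) / Real.Gamma (c+(b+s+1))) := by
  have hs : (0:ℝ) ≤ s := by rw [hsn]; positivity
  have has : -1 < a + s := by linarith
  have hbs : 0 < b + s + 1 := by linarith
  rw [integral_integral_swap (mf_int ha hb hc hsn)]
  rw [setIntegral_congr_fun measurableSet_Ioi (mf_sect_int has hb hc hs)]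
  rw [integral_const_mul, B_val hc hbs]

lemma W_mf_eq (hc : 0 < c) {sn : ℕ} (hsn : s = (sn:ℝ)) : ∀ x ∈ Ioi (0:ℝ),
    (x:ℝ) ^ sn * W a b c x
      = (Real.Gamma (c+b+1) / (Real.Gamma (a+1) * Real.Gamma (b+1) * Real.Gamma c)) *
          ∫ t in Ioi (0:ℝ), mf a b c s x t := by
  intro x hx
  have hx0 : (0:ℝ) < x := hx
  have hmf : ∀ t : ℝ, mf a b c s x t
      = (x ^ (a+s) * Real.exp (-x)) * (t ^ (c-1) * (1+t) ^ (a-b-c) * Real.exp (-(t*x))) := by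
    intro t; unfold mf; ring
  simp_rw [hmf]
  rw [integral_const_mul]
  unfold W TricomiU
  have he : a - b + 1 - c - 1 = a - b - c := by ring
  rw [he]
  simp_rw [neg_mul]
  have hxs : (x:ℝ) ^ sn = x ^ ((sn:ℝ)) := (Real.rpow_natCast x sn).symm
  have hxa : x ^ (a + s) = x ^ a * x ^ s := Real.rpow_add hx0 _ _
  rw [hxa, hsn, ← hxs]
  field_simp

lemma moment_int (ha : -1 < a) (hb : -1 < b) (hc : 0 < c) (sn : ℕ) :
    IntegrableOn (fun x : ℝ => x ^ sn * W a b c x) (Ioi 0) := by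
  apply Integrable.congr
    (((mf_int (s := (sn:ℝ)) ha hb hc rfl).integral_prod_left).const_mul
      (Real.Gamma (c+b+1) / (Real.Gamma (a+1) * Real.Gamma (b+1) * Real.Gamma c)))
  filter_upwards [ae_restrict_mem measurableSet_Ioi] with x hx
  exact (W_mf_eq hc rfl x hx).symm

lemma moment_eq (ha : -1 < a) (hb : -1 < b) (hc : 0 < c) (sn : ℕ) :
    ∫ x in Ioi (0:ℝ), x ^ sn * W a b c x
      = Real.Gamma (c+b+1) * Real.Gamma (a+1+sn) * Real.Gamma (b+1+sn)
        / (Real.Gamma (a+1) * Real.Gamma (b+1) * Real.Gamma (c+b+1+sn)) := by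
  rw [setIntegral_congr_fun measurableSet_Ioi (W_mf_eq hc rfl)]
  rw [integral_const_mul, moment_val (s := (sn:ℝ)) ha hb hc rfl]
  have e1 : a + (sn:ℝ) + 1 = a + 1 + sn := by ring
  have e2 : b + (sn:ℝ) + 1 = b + 1 + sn := by ring
  rw [e1, e2]
  have e3 : c + (b + 1 + (sn:ℝ)) = c + b + 1 + sn := by ring
  rw [e3]
  have g1 : Real.Gamma (a+1) ≠ 0 := (Real.Gamma_pos_of_pos (by linarith)).ne'
  have g2 : Real.Gamma (b+1) ≠ 0 := (Real.Gamma_pos_of_pos (by linarith)).ne'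
  have g3 : Real.Gamma c ≠ 0 := (Real.Gamma_pos_of_pos hc).ne'
  have g4 : Real.Gamma (c+b+1+sn) ≠ 0 := by
    apply (Real.Gamma_pos_of_pos _).ne'
    have : (0:ℝ) ≤ sn := by positivity
    linarith
  field_simp

end Moment

/-! ### The key per-term identity -/

lemma term_eq (a b c : ℝ) (ha : -1 < a) (hb : -1 < b) (hc0 : 0 < c)
    (d k n m r j : ℕ) (hj : j ≤ n) (hmr : m = d + k + r) :
    (-1:ℝ)^(n-j) * (n.choose j : ℝ) *
      (poch (a+1+j) (n-j) * poch (b+1+j) (n-j) / poch (c+b+1+(m:ℝ)+j) (n-j)) *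
      (Real.Gamma (c+(d:ℝ)+b+1) * Real.Gamma (a+1+((k+j:ℕ):ℝ)) * Real.Gamma (b+1+((k+j:ℕ):ℝ)) /
        (Real.Gamma (a+1) * Real.Gamma (b+1) * Real.Gamma (c+(d:ℝ)+b+1+((k+j:ℕ):ℝ))))
    = (Real.Gamma (a+1+(n:ℝ)) * Real.Gamma (b+1+(n:ℝ)) * Real.Gamma (c+(d:ℝ)+b+1) /
        (Real.Gamma (c+b+1+(m:ℝ)+(n:ℝ)) * Real.Gamma (a+1) * Real.Gamma (b+1))) *
      ((-1:ℝ)^n * ((-1:ℝ)^j * (n.choose j : ℝ) *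
        (poch (a+1+(j:ℝ)) k * poch (b+1+(j:ℝ)) k * poch (c+b+1+(d:ℝ)+(k:ℝ)+(j:ℝ)) r))) := by
  have hj0 : (0:ℝ) ≤ (j:ℝ) := Nat.cast_nonneg j
  have hk0 : (0:ℝ) ≤ (k:ℝ) := Nat.cast_nonneg k
  have hd0 : (0:ℝ) ≤ (d:ℝ) := Nat.cast_nonneg d
  have hm0 : (0:ℝ) ≤ (m:ℝ) := Nat.cast_nonneg m
  have hn0 : (0:ℝ) ≤ (n:ℝ) := Nat.cast_nonneg n
  have hza : (0:ℝ) < a + 1 + j := by linarith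
  have hzb : (0:ℝ) < b + 1 + j := by linarith
  have hzc : (0:ℝ) < c + b + 1 + (m:ℝ) + j := by linarith
  have hzd : (0:ℝ) < c + b + 1 + (d:ℝ) + (k:ℝ) + (j:ℝ) := by linarith
  have H1 : Real.Gamma (a+1+(n:ℝ)) = poch (a+1+j) (n-j) * Real.Gamma (a+1+(j:ℝ)) := by
    have h := Gamma_add_nat hza (n-j)
    rwa [show a+1+(j:ℝ)+((n-j:ℕ):ℝ) = a+1+(n:ℝ) by rw [Nat.cast_sub hj]; ring] at h
  have H2 : Real.Gamma (b+1+(n:ℝ)) = poch (b+1+j) (n-j) * Real.Gamma (b+1+(j:ℝ)) := by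
    have h := Gamma_add_nat hzb (n-j)
    rwa [show b+1+(j:ℝ)+((n-j:ℕ):ℝ) = b+1+(n:ℝ) by rw [Nat.cast_sub hj]; ring] at h
  have H3 : Real.Gamma (c+b+1+(m:ℝ)+(n:ℝ))
      = poch (c+b+1+(m:ℝ)+j) (n-j) * Real.Gamma (c+b+1+(m:ℝ)+(j:ℝ)) := by
    have h := Gamma_add_nat hzc (n-j)
    rwa [show c+b+1+(m:ℝ)+(j:ℝ)+((n-j:ℕ):ℝ) = c+b+1+(m:ℝ)+(n:ℝ) by
      rw [Nat.cast_sub hj]; ring] at h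
  have H4 : Real.Gamma (a+1+((k+j:ℕ):ℝ)) = poch (a+1+j) k * Real.Gamma (a+1+(j:ℝ)) := by
    have h := Gamma_add_nat hza k
    rwa [show a+1+(j:ℝ)+(k:ℝ) = a+1+((k+j:ℕ):ℝ) by push_cast; ring] at h
  have H5 : Real.Gamma (b+1+((k+j:ℕ):ℝ)) = poch (b+1+j) k * Real.Gamma (b+1+(j:ℝ)) := by
    have h := Gamma_add_nat hzb k
    rwa [show b+1+(j:ℝ)+(k:ℝ) = b+1+((k+j:ℕ):ℝ) by push_cast; ring] at h
  have H6 : Real.Gamma (c+b+1+(m:ℝ)+(j:ℝ))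
      = poch (c+b+1+(d:ℝ)+(k:ℝ)+(j:ℝ)) r * Real.Gamma (c+b+1+(d:ℝ)+(k:ℝ)+(j:ℝ)) := by
    have h := Gamma_add_nat hzd r
    rwa [show c+b+1+(d:ℝ)+(k:ℝ)+(j:ℝ)+(r:ℝ) = c+b+1+(m:ℝ)+(j:ℝ) by
      rw [hmr]; push_cast; ring] at h
  have H7 : Real.Gamma (c+(d:ℝ)+b+1+((k+j:ℕ):ℝ)) = Real.Gamma (c+b+1+(d:ℝ)+(k:ℝ)+(j:ℝ)) := by
    congr 1; push_cast; ring
  have hs1 : (-1:ℝ)^(n-j) = (-1)^n * (-1)^j := by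
    have h2 : ((-1:ℝ))^(j+j) = 1 := Even.neg_one_pow ⟨j, rfl⟩
    have h3 : (-1:ℝ)^n = (-1)^(n-j) * (-1)^j := by
      rw [← pow_add]; congr 1; omega
    rw [h3, mul_assoc, ← pow_add, h2, mul_one]
  rw [H1, H2, H3, H4, H5, H6, H7, hs1]
  have gA : Real.Gamma (a+1+(j:ℝ)) ≠ 0 := (Real.Gamma_pos_of_pos hza).ne'
  have gB : Real.Gamma (b+1+(j:ℝ)) ≠ 0 := (Real.Gamma_pos_of_pos hzb).ne'
  have gD : Real.Gamma (c+b+1+(d:ℝ)+(k:ℝ)+(j:ℝ)) ≠ 0 := (Real.Gamma_pos_of_pos hzd).ne'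
  have g1 : Real.Gamma (a+1) ≠ 0 := (Real.Gamma_pos_of_pos (by linarith)).ne'
  have g2 : Real.Gamma (b+1) ≠ 0 := (Real.Gamma_pos_of_pos (by linarith)).ne'
  have pC : poch (c+b+1+(m:ℝ)+j) (n-j) ≠ 0 := (poch_pos hzc _).ne'
  have pD : poch (c+b+1+(d:ℝ)+(k:ℝ)+(j:ℝ)) r ≠ 0 := (poch_pos hzd _).ne'
  field_simp

/-! ### Main theorem -/

theorem orthogonality_first_weight (a b c : ℝ) (ha : a > -1) (hb : b > -1)
    (hc : c > max 0 (a - b)) (d : ℕ) (hd : d ≤ 1) (k n : ℕ) (hkn : 2 * k + 1 ≤ n) :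
    ∫ x in Set.Ioi (0:ℝ), x ^ k * Ptype2 d a b c n x * W a b (c + d) x = 0 := by
  have hc0 : (0:ℝ) < c := (le_max_left 0 (a-b)).trans_lt hc
  have hd0 : (0:ℝ) ≤ (d:ℝ) := Nat.cast_nonneg d
  have hcd : (0:ℝ) < c + d := by linarith
  set m : ℕ := (n + d) / 2 with hm
  have hmdk : d + k ≤ m := by omega
  set r : ℕ := m - d - k with hr
  have hmr : m = d + k + r := by omega
  have hdeg : 2 * k + r < n := by omega
  -- the coefficient of x^j in x^k * Ptype2
  set coef : ℕ → ℝ := fun j => (-1 : ℝ) ^ (n - j) * (n.choose j : ℝ) *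
      (poch (a + 1 + j) (n - j) * poch (b + 1 + j) (n - j) /
        poch (c + b + 1 + (m:ℝ) + j) (n - j)) with hcoef
  have hfun : ∀ x : ℝ, x ^ k * Ptype2 d a b c n x * W a b (c + d) x
      = ∑ j ∈ Finset.range (n+1), coef j * (x ^ (k + j) * W a b (c + d) x) := by
    intro x
    unfold Ptype2
    rw [← hm, Finset.mul_sum, Finset.sum_mul]
    refine Finset.sum_congr rfl fun j _ => ?_
    simp only [hcoef]
    rw [pow_add]
    ring
  simp_rw [hfun]
  rw [integral_finset_sum _ (fun j _ => ((moment_int ha hb hcd (k+j)).const_mul (coef j)))]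
  have hval : ∀ j ∈ Finset.range (n+1),
      (∫ x in Ioi (0:ℝ), coef j * (x ^ (k+j) * W a b (c + d) x))
      = (Real.Gamma (a+1+(n:ℝ)) * Real.Gamma (b+1+(n:ℝ)) * Real.Gamma (c+(d:ℝ)+b+1) /
          (Real.Gamma (c+b+1+(m:ℝ)+(n:ℝ)) * Real.Gamma (a+1) * Real.Gamma (b+1))) *
        ((-1:ℝ)^n * ((-1:ℝ)^j * (n.choose j : ℝ) *
          (poch (a+1+(j:ℝ)) k * poch (b+1+(j:ℝ)) k * poch (c+b+1+(d:ℝ)+(k:ℝ)+(j:ℝ)) r))) := by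
    intro j hjr
    have hj : j ≤ n := by simp at hjr; omega
    rw [integral_const_mul, moment_eq ha hb hcd (k+j)]
    rw [hcoef]
    have := term_eq a b c ha hb hc0 d k n m r j hj hmr
    rw [show c + (d:ℝ) + b + 1 + ((k+j:ℕ):ℝ) = c + (d:ℝ) + b + 1 + ((k+j:ℕ):ℝ) from rfl]
    exact this
  rw [Finset.sum_congr rfl hval, ← Finset.mul_sum, ← Finset.mul_sum]
  -- now the polynomial sum vanishes
  set P : Polynomial ℝ :=
    (∏ i ∈ Finset.range k, (Polynomial.X + Polynomial.C (a+1+(i:ℝ)))) *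
    (∏ i ∈ Finset.range k, (Polynomial.X + Polynomial.C (b+1+(i:ℝ)))) *
    (∏ i ∈ Finset.range r, (Polynomial.X + Polynomial.C (c+b+1+(d:ℝ)+(k:ℝ)+(i:ℝ)))) with hP
  have hPeval : ∀ j : ℕ, P.eval (j:ℝ)
      = poch (a+1+(j:ℝ)) k * poch (b+1+(j:ℝ)) k * poch (c+b+1+(d:ℝ)+(k:ℝ)+(j:ℝ)) r := by
    intro j
    rw [hP]
    simp only [Polynomial.eval_mul, Polynomial.eval_prod, Polynomial.eval_add,
      Polynomial.eval_X, Polynomial.eval_C]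
    unfold poch
    congr 1
    · congr 1
      · exact Finset.prod_congr rfl fun i _ => by ring
      · exact Finset.prod_congr rfl fun i _ => by ring
    · exact Finset.prod_congr rfl fun i _ => by ring
  have hPdeg : P.natDegree = 2 * k + r := by
    rw [hP]
    rw [Polynomial.natDegree_mul (mul_ne_zero
        (Finset.prod_ne_zero_iff.mpr fun i _ => Polynomial.X_add_C_ne_zero _)
        (Finset.prod_ne_zero_iff.mpr fun i _ => Polynomial.X_add_C_ne_zero _))
      (Finset.prod_ne_zero_iff.mpr fun i _ => Polynomial.X_add_C_ne_zero _),
      Polynomial.natDegree_mul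
        (Finset.prod_ne_zero_iff.mpr fun i _ => Polynomial.X_add_C_ne_zero _)
        (Finset.prod_ne_zero_iff.mpr fun i _ => Polynomial.X_add_C_ne_zero _)]
    rw [Polynomial.natDegree_prod _ _ (fun i _ => Polynomial.X_add_C_ne_zero _),
      Polynomial.natDegree_prod _ _ (fun i _ => Polynomial.X_add_C_ne_zero _),
      Polynomial.natDegree_prod _ _ (fun i _ => Polynomial.X_add_C_ne_zero _)]
    simp only [Polynomial.natDegree_X_add_C, Finset.sum_const, Finset.card_range,
      smul_eq_mul, mul_one]
    omega
  have hzero : ∑ j ∈ Finset.range (n+1), (-1:ℝ)^j * (n.choose j : ℝ) *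
      (poch (a+1+(j:ℝ)) k * poch (b+1+(j:ℝ)) k * poch (c+b+1+(d:ℝ)+(k:ℝ)+(j:ℝ)) r) = 0 := by
    have h := alt_sum_poly n P (by omega)
    rw [← h]
    exact Finset.sum_congr rfl fun j _ => by rw [hPeval]
  have hsum : ∑ j ∈ Finset.range (n+1), ((-1:ℝ)^j * (n.choose j : ℝ) *
      (poch (a+1+(j:ℝ)) k * poch (b+1+(j:ℝ)) k * poch (c+b+1+(d:ℝ)+(k:ℝ)+(j:ℝ)) r)) = 0 :=
    hzero
  rw [hsum, mul_zero, mul_zero]
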